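/- Let s : ℝⁿ → ℝ be twice continuously differentiable, let x, y ∈ ℝⁿ with x ≠ y, and let σ, μ ≥ 0. Suppose s(y) = 0, the gradient satisfies ∇s(y) = −‖∇s(y)‖₂ · (x − y)/‖x − y‖₂ with ‖∇s(y)‖₂ ≥ σ, and the second derivative (Hessian) satisfies ‖∇²s(ξ)‖ ≤ μ in operator norm for every ξ on the segment from y to x. Then s(x) ≤ −(σ − (μ/2)·‖x − y‖₂)·‖x − y‖₂. -/

import Mathlib

open Set InnerProductSpace Topology

theorem stmt10 {n : ℕ} (s : EuclideanSpace ℝ (Fin n) → ℝ) (hs : ContDiff ℝ 2 s)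
    (x y : EuclideanSpace ℝ (Fin n)) (hxy : x ≠ y) (σ μ : ℝ) (hσ : 0 ≤ σ) (hμ : 0 ≤ μ)
    (hsy : s y = 0)
    (hgrad : gradient s y = -(‖gradient s y‖ / ‖x - y‖) • (x - y))
    (hgradlb : σ ≤ ‖gradient s y‖)
    (hhess : ∀ ξ ∈ segment ℝ y x, ‖iteratedFDeriv ℝ 2 s ξ‖ ≤ μ) :
    s x ≤ -(σ - μ / 2 * ‖x - y‖) * ‖x - y‖ := by
  set v : EuclideanSpace ℝ (Fin n) := x - y with hv
  have hvne : v ≠ 0 := sub_ne_zero.mpr hxy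
  set r : ℝ := ‖v‖ with hrdef
  have hr : 0 < r := norm_pos_iff.mpr hvne
  set G : ℝ := ‖gradient s y‖ with hGdef
  set g : ℝ → ℝ := fun t => s (y + t • v) with hgdef
  have hL : ContDiff ℝ 2 (fun t : ℝ => y + t • v) :=
    contDiff_const.add (contDiff_id.smul contDiff_const)
  have hg : ContDiff ℝ 2 g := hs.comp hL
  have hsd : Differentiable ℝ s := hs.differentiable two_ne_zero
  have hs' : ContDiff ℝ 1 (fderiv ℝ s) := by
    have := (contDiff_succ_iff_fderiv (n := 1)).mp (by exact_mod_cast hs)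
    exact this.2.2
  have hsd' : Differentiable ℝ (fderiv ℝ s) := hs'.differentiable one_ne_zero
  have hA : ∀ t : ℝ, HasDerivAt (fun t : ℝ => y + t • v) v t := by
    intro t
    simpa using ((hasDerivAt_id t).smul_const v).const_add y
  have hg' : ∀ t : ℝ, HasDerivAt g (fderiv ℝ s (y + t • v) v) t := fun t =>
    ((hsd (y + t • v)).hasFDerivAt).comp_hasDerivAt t (hA t)
  have hderivg : deriv g = fun t => fderiv ℝ s (y + t • v) v :=
    funext fun t => (hg' t).deriv
  have hg'' : ∀ t : ℝ, HasDerivAt (deriv g)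
      (fderiv ℝ (fderiv ℝ s) (y + t • v) v v) t := by
    intro t
    rw [hderivg]
    have hF : HasDerivAt (fun t : ℝ => fderiv ℝ s (y + t • v))
        (fderiv ℝ (fderiv ℝ s) (y + t • v) v) t :=
      ((hsd' (y + t • v)).hasFDerivAt).comp_hasDerivAt t (hA t)
    simpa using hF.clm_apply (hasDerivAt_const t v)
  -- membership of points in the segment
  have hseg : ∀ t : ℝ, t ∈ Icc (0:ℝ) 1 → y + t • v ∈ segment ℝ y x := by
    intro t ht
    rw [segment_eq_image']
    exact ⟨t, ht, rfl⟩
  -- second derivative bound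
  have hbound : ∀ t : ℝ, t ∈ Icc (0:ℝ) 1 → |iteratedDeriv 2 g t| ≤ μ * r ^ 2 := by
    intro t ht
    have h2 : iteratedDeriv 2 g t = fderiv ℝ (fderiv ℝ s) (y + t • v) v v := by
      rw [iteratedDeriv_succ, iteratedDeriv_one]
      exact (hg'' t).deriv
    have h3 : iteratedFDeriv ℝ 2 s (y + t • v) ![v, v]
        = fderiv ℝ (fderiv ℝ s) (y + t • v) v v := by
      rw [iteratedFDeriv_two_apply]
      norm_num
    have h4 : ‖iteratedFDeriv ℝ 2 s (y + t • v) ![v, v]‖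
        ≤ ‖iteratedFDeriv ℝ 2 s (y + t • v)‖ * ∏ i : Fin 2, ‖(![v, v]) i‖ :=
      (iteratedFDeriv ℝ 2 s (y + t • v)).le_opNorm _
    have h5 : (∏ i : Fin 2, ‖(![v, v]) i‖) = r ^ 2 := by
      simp [Fin.prod_univ_two, sq, hrdef]
    rw [h2, ← h3]
    calc |iteratedFDeriv ℝ 2 s (y + t • v) ![v, v]|
        ≤ ‖iteratedFDeriv ℝ 2 s (y + t • v)‖ * r ^ 2 := by
          rw [← h5]; exact h4
      _ ≤ μ * r ^ 2 := by
          have := hhess _ (hseg t ht)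
          have h6 : (0:ℝ) ≤ r ^ 2 := sq_nonneg r
          nlinarith [norm_nonneg (iteratedFDeriv ℝ 2 s (y + t • v))]
  -- Taylor's theorem
  have hf : ContDiffOn ℝ 1 g (Icc (0:ℝ) 1) := (hg.of_le one_le_two).contDiffOn
  have hf' : DifferentiableOn ℝ (iteratedDerivWithin 1 g (Icc (0:ℝ) 1)) (Ioo (0:ℝ) 1) := by
    have := hg.contDiffOn.differentiableOn_iteratedDerivWithin
      (m := 1) (by exact_mod_cast one_lt_two) (uniqueDiffOn_Icc one_pos)
    exact this.mono Ioo_subset_Icc_self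
  obtain ⟨c, hc, hct⟩ := taylor_mean_remainder_lagrange (f := g) (x₀ := 0) (x := 1) (n := 1)
    zero_ne_one (by rw [uIcc_of_le zero_le_one]; exact_mod_cast hf)
    (by rw [uIcc_of_le zero_le_one, uIoo_of_le zero_le_one]; exact hf')
  rw [uIcc_of_le zero_le_one] at hct
  rw [uIoo_of_le zero_le_one] at hc
  have hcIcc : c ∈ Icc (0:ℝ) 1 := Ioo_subset_Icc_self hc
  -- within-derivatives equal global ones at interior point c
  have hwithin : iteratedDerivWithin 2 g (Icc (0:ℝ) 1) c = iteratedDeriv 2 g c := by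
    have hmem : Icc (0:ℝ) 1 ∈ 𝓝 c := Icc_mem_nhds hc.1 hc.2
    have hEq : Icc (0:ℝ) 1 =ᶠ[𝓝 c] (univ : Set ℝ) := by
      rw [Filter.eventuallyEq_univ]; exact hmem
    rw [iteratedDerivWithin, iteratedDeriv,
      iteratedFDerivWithin_congr_set hEq, iteratedFDerivWithin_univ]
  -- Taylor polynomial of order one at 0 evaluated at 1
  have hdw : derivWithin g (Icc (0:ℝ) 1) 0 = deriv g 0 :=
    (hg' 0).differentiableAt.derivWithin
      (uniqueDiffOn_Icc one_pos 0 ⟨le_refl 0, zero_le_one⟩)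
  have htp : taylorWithinEval g 1 (Icc (0:ℝ) 1) 0 1 = g 0 + deriv g 0 := by
    rw [taylor_within_apply]
    rw [Finset.sum_range_succ, Finset.sum_range_one, iteratedDerivWithin_zero,
      iteratedDerivWithin_one, hdw]
    norm_num
  -- first derivative at 0
  have hinner : fderiv ℝ s y v = -(G * r) := by
    have h1 : fderiv ℝ s y v = inner ℝ (gradient s y) v := by
      rw [gradient]
      simp [real_inner_comm]
    rw [h1, hgrad, real_inner_smul_left, real_inner_self_eq_norm_sq, ← hrdef]
    field_simp
  have hd0 : deriv g 0 = -(G * r) := by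
    rw [hderivg]
    simpa using hinner
  -- assemble
  have hg1 : g 1 = s x := by simp [hgdef, hv]
  have hg0 : g 0 = 0 := by simp [hgdef, hsy]
  rw [htp, hg0, hd0, hg1] at hct
  norm_num [hwithin] at hct
  have hb := hbound c hcIcc
  have habs := abs_le.mp hb
  have hσr : σ * r ≤ G * r := mul_le_mul_of_nonneg_right hgradlb hr.le
  nlinarith [sq_nonneg r]
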